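/- Let (S, 𝒜, μ) be a complete finite measure space, H̃ a separable real Hilbert space, and U ⊆ H̃ a nonempty closed set. Let 𝒰 := {u ∈ L²(S, μ; H̃) : u(s) ∈ U for a.e. s} and let ū ∈ 𝒰. If v ∈ L²(S, μ; H̃) satisfies v(s) ∈ T_U(ū(s)) for a.e. s ∈ S, then v belongs to the adjacent cone T_𝒰(ū) computed in the Hilbert space L²(S, μ; H̃); that is, lim_{ε→0⁺} dist_{L²}(ū + εv, 𝒰)/ε = 0. -/

import Mathlib

open Filter Topology Metric MeasureTheory
open scoped ENNReal NNReal

/-- The adjacent (intermediate) tangent cone to `K` at `x`. -/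
def adjacentCone {X : Type*} [NormedAddCommGroup X] [NormedSpace ℝ X]
    (K : Set X) (x : X) : Set X :=
  {v | Tendsto (fun ε : ℝ => infDist (x + ε • v) K / ε) (𝓝[>] (0 : ℝ)) (𝓝 0)}

theorem pointwise_adjacent_implies_L2_adjacent
    {S : Type*} [MeasurableSpace S] (μ : Measure S) [IsFiniteMeasure μ]
    (hcomplete : μ.IsComplete)
    {Ht : Type*} [NormedAddCommGroup Ht] [InnerProductSpace ℝ Ht] [CompleteSpace Ht]
    [SecondCountableTopology Ht]
    (U : Set Ht) (hUne : U.Nonempty) (hUcl : IsClosed U)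
    (ubar : Lp Ht 2 μ) (hubar : ∀ᵐ s ∂μ, ubar s ∈ U)
    (v : Lp Ht 2 μ) (hv : ∀ᵐ s ∂μ, v s ∈ adjacentCone U (ubar s)) :
    v ∈ adjacentCone {u : Lp Ht 2 μ | ∀ᵐ s ∂μ, u s ∈ U} ubar := by
  classical
  borelize Ht
  haveI : Nonempty ↥U := hUne.to_subtype
  -- a countable dense sequence in U
  set x : ℕ → Ht := fun n => (TopologicalSpace.denseSeq ↥U n : Ht) with hxdef
  have hxU : ∀ n, x n ∈ U := fun n => (TopologicalSpace.denseSeq ↥U n).2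
  have hxdense : ∀ y ∈ U, ∀ r > (0:ℝ), ∃ n, dist y (x n) < r := by
    intro y hy r hr
    rcases Metric.denseRange_iff.1 (TopologicalSpace.denseRange_denseSeq ↥U) ⟨y, hy⟩ r hr
      with ⟨n, hn⟩
    exact ⟨n, by simpa [Subtype.dist_eq] using hn⟩
  -- pointwise distance function
  set D : ℝ → S → ℝ := fun ε s => infDist (ubar s + ε • v s) U with hDdef
  have hDsm : ∀ ε : ℝ, StronglyMeasurable (D ε) := fun ε =>
    (continuous_infDist_pt U).comp_stronglyMeasurable
      ((Lp.stronglyMeasurable ubar).add ((Lp.stronglyMeasurable v).const_smul ε))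
  have hD0 : ∀ ε s, 0 ≤ D ε s := fun ε s => infDist_nonneg
  have hDle : ∀ ε : ℝ, ∀ᵐ s ∂μ, D ε s ≤ |ε| * ‖v s‖ := by
    intro ε
    filter_upwards [hubar] with s hs
    calc D ε s ≤ dist (ubar s + ε • v s) (ubar s) := infDist_le_dist_of_mem hs
      _ = ‖ε • v s‖ := by simp [dist_eq_norm]
      _ = |ε| * ‖v s‖ := by rw [norm_smul, Real.norm_eq_abs]
  have hDfin : ∀ ε : ℝ, eLpNorm (D ε) 2 μ ≠ ∞ := by
    intro ε
    have h1 : eLpNorm (D ε) 2 μ ≤ eLpNorm (fun s => |ε| * ‖v s‖) 2 μ := by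
      apply eLpNorm_mono_ae
      filter_upwards [hDle ε] with s hs
      rw [Real.norm_eq_abs, abs_of_nonneg (hD0 ε s)]
      exact hs.trans (le_abs_self _)
    have h2 : eLpNorm (fun s => |ε| * ‖v s‖) 2 μ = ‖|ε|‖₊ * eLpNorm v 2 μ := by
      rw [show (fun s => |ε| * ‖v s‖) = |ε| • fun s => ‖v s‖ from rfl,
        eLpNorm_const_smul, eLpNorm_norm, enorm_eq_nnnorm]
    exact ne_top_of_le_ne_top (by
      rw [h2]; exact (ENNReal.mul_lt_top ENNReal.coe_lt_top (Lp.eLpNorm_lt_top v)).ne) h1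
  -- Step 1: the L² infDist is bounded by the L² norm of the pointwise distance
  have key : ∀ ε : ℝ, 0 < ε →
      infDist (ubar + ε • v) {u : Lp Ht 2 μ | ∀ᵐ s ∂μ, u s ∈ U} ≤
        (eLpNorm (D ε) 2 μ).toReal := by
    intro ε hε
    set c : ℝ := (μ Set.univ).toReal ^ ((1:ℝ)/2) with hcdef
    have hc0 : 0 ≤ c := Real.rpow_nonneg ENNReal.toReal_nonneg _
    refine le_of_forall_pos_le_add fun δ hδ => ?_
    set δ' : ℝ := δ / (1 + c) with hδ'def
    have hδ'0 : 0 < δ' := div_pos hδ (by linarith)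
    set f : S → Ht := ⇑(ubar + ε • v) with hfdef
    have hfae : f =ᵐ[μ] fun s => ubar s + ε • v s := by
      filter_upwards [Lp.coeFn_add ubar (ε • v), Lp.coeFn_smul ε v] with s h1 h2
      show (⇑(ubar + ε • v)) s = _
      rw [h1]; simp [h2]
    have hfm : StronglyMeasurable f := Lp.stronglyMeasurable _
    have hex : ∀ s, ∃ n, dist (f s) (x n) < infDist (f s) U + δ' := by
      intro s
      obtain ⟨z, hzU, hz⟩ := (infDist_lt_iff hUne).1
        (show infDist (f s) U < infDist (f s) U + δ' / 2 by linarith)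
      obtain ⟨n, hn⟩ := hxdense z hzU (δ' / 2) (by linarith)
      exact ⟨n, by
        calc dist (f s) (x n) ≤ dist (f s) z + dist z (x n) := dist_triangle _ _ _
          _ < infDist (f s) U + δ' := by linarith⟩
    set u : S → Ht := fun s => x (Nat.find (hex s)) with hudef
    have hum : Measurable u := by
      have hN : Measurable fun s => Nat.find (hex s) := by
        apply measurable_find
        intro n
        exact measurableSet_lt (hfm.dist stronglyMeasurable_const).measurable
          (((continuous_infDist_pt U).comp_stronglyMeasurable hfm).measurable.add
            measurable_const)
      exact (measurable_from_top (f := x)).comp hN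
    have husm : StronglyMeasurable u := hum.stronglyMeasurable
    have huU : ∀ s, u s ∈ U := fun s => hxU _
    have hud : ∀ s, dist (f s) (u s) ≤ infDist (f s) U + δ' := fun s =>
      (Nat.find_spec (hex s)).le
    -- u is in L²
    have hg : MemLp (fun s => |ε| * ‖v s‖ + δ') 2 μ :=
      ((Lp.memLp v).norm.const_mul |ε|).add (memLp_const δ')
    have hDf : ∀ᵐ s ∂μ, infDist (f s) U ≤ |ε| * ‖v s‖ := by
      filter_upwards [hfae, hDle ε] with s h1 h2
      rw [h1]; exact h2
    have hufm : MemLp (fun s => u s - f s) 2 μ := by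
      refine MemLp.of_le hg (husm.sub hfm).aestronglyMeasurable ?_
      filter_upwards [hDf] with s h1
      have h2 : ‖u s - f s‖ = dist (f s) (u s) := by
        rw [dist_comm, dist_eq_norm]
      rw [h2]
      exact ((hud s).trans (by linarith)).trans (le_abs_self _)
    have huL : MemLp u 2 μ := by
      have hrw : u = fun s => (u s - f s) + f s := by funext s; abel
      rw [hrw]
      exact hufm.add (Lp.memLp (ubar + ε • v))
    set uLp : Lp Ht 2 μ := huL.toLp u with huLpdef
    have huLpmem : uLp ∈ {u : Lp Ht 2 μ | ∀ᵐ s ∂μ, u s ∈ U} := by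
      filter_upwards [huL.coeFn_toLp] with s hs
      rw [hs]; exact huU s
    have h1 : infDist (ubar + ε • v) {u : Lp Ht 2 μ | ∀ᵐ s ∂μ, u s ∈ U} ≤
        dist (ubar + ε • v) uLp := infDist_le_dist_of_mem huLpmem
    have h2 : dist (ubar + ε • v) uLp = (eLpNorm (fun s => f s - u s) 2 μ).toReal := by
      rw [Lp.dist_def]
      congr 1
      apply eLpNorm_congr_ae
      filter_upwards [huL.coeFn_toLp] with s hs
      show f s - uLp s = f s - u s
      rw [hs]
    have h3 : eLpNorm (fun s => f s - u s) 2 μ ≤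
        eLpNorm (D ε) 2 μ + ENNReal.ofReal δ' * μ Set.univ ^ ((1:ℝ)/2) := by
      have hDae : ∀ᵐ s ∂μ, infDist (f s) U = D ε s := by
        filter_upwards [hfae] with s h1
        rw [hDdef]; simp only; rw [← h1]
      calc eLpNorm (fun s => f s - u s) 2 μ ≤ eLpNorm (fun s => D ε s + δ') 2 μ := by
            apply eLpNorm_mono_ae
            filter_upwards [hDae] with s h1
            have : ‖f s - u s‖ = dist (f s) (u s) := by rw [dist_eq_norm]
            rw [this]
            refine ((hud s).trans_eq (by rw [h1])).trans (le_abs_self _)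
        _ ≤ eLpNorm (D ε) 2 μ + eLpNorm (fun _ => δ') 2 μ :=
            eLpNorm_add_le (hDsm ε).aestronglyMeasurable aestronglyMeasurable_const one_le_two
        _ = eLpNorm (D ε) 2 μ + ENNReal.ofReal δ' * μ Set.univ ^ ((1:ℝ)/2) := by
            rw [eLpNorm_const' _ two_ne_zero ENNReal.ofNat_ne_top,
              Real.enorm_eq_ofReal hδ'0.le]
            norm_num
    have h4 : (eLpNorm (fun s => f s - u s) 2 μ).toReal ≤
        (eLpNorm (D ε) 2 μ).toReal + δ' * c := by
      have hfin2 : ENNReal.ofReal δ' * μ Set.univ ^ ((1:ℝ)/2) ≠ ∞ := by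
        apply ENNReal.mul_ne_top ENNReal.ofReal_ne_top
        exact (ENNReal.rpow_lt_top_of_nonneg (by norm_num) (measure_ne_top μ _)).ne
      have := ENNReal.toReal_mono (by
        exact ENNReal.add_ne_top.2 ⟨hDfin ε, hfin2⟩) h3
      rwa [ENNReal.toReal_add (hDfin ε) hfin2, ENNReal.toReal_mul,
        ENNReal.toReal_ofReal hδ'0.le, ← ENNReal.toReal_rpow] at this
    have h5 : δ' * c ≤ δ := by
      rw [hδ'def, div_mul_eq_mul_div, div_le_iff₀ (by linarith : (0:ℝ) < 1 + c)]
      nlinarith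
    calc infDist (ubar + ε • v) {u : Lp Ht 2 μ | ∀ᵐ s ∂μ, u s ∈ U} ≤
        dist (ubar + ε • v) uLp := h1
      _ = (eLpNorm (fun s => f s - u s) 2 μ).toReal := h2
      _ ≤ (eLpNorm (D ε) 2 μ).toReal + δ' * c := h4
      _ ≤ (eLpNorm (D ε) 2 μ).toReal + δ := by linarith
  -- Step 2: the L² norm of the rescaled pointwise distance tends to 0
  have step2 : Tendsto (fun ε : ℝ => (eLpNorm (fun s => D ε s / ε) 2 μ).toReal)
      (𝓝[>] (0:ℝ)) (𝓝 0) := by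
    have hI : Tendsto (fun ε : ℝ => ∫⁻ s, (‖D ε s / ε‖₊ : ℝ≥0∞) ^ (2:ℝ) ∂μ)
        (𝓝[>] (0:ℝ)) (𝓝 0) := by
      have h0 : (0:ℝ≥0∞) = ∫⁻ _, 0 ∂μ := by simp
      rw [h0]
      apply tendsto_lintegral_filter_of_dominated_convergence
        (fun s => (‖v s‖₊ : ℝ≥0∞) ^ (2:ℝ))
      · apply Eventually.of_forall
        intro ε
        have : Measurable fun s => D ε s / ε := ((hDsm ε).measurable.div measurable_const)
        exact (this.nnnorm.coe_nnreal_ennreal).pow_const _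
      · filter_upwards [self_mem_nhdsWithin] with ε (hε : 0 < ε)
        filter_upwards [hDle ε] with s hs
        apply ENNReal.rpow_le_rpow _ (by norm_num)
        rw [ENNReal.coe_le_coe]
        have habs : ‖D ε s / ε‖₊ = ‖D ε s / ε‖ := rfl
        have : |D ε s / ε| ≤ ‖v s‖ := by
          rw [abs_of_nonneg (div_nonneg (hD0 ε s) hε.le), div_le_iff₀ hε]
          calc D ε s ≤ |ε| * ‖v s‖ := hs
            _ = ‖v s‖ * ε := by rw [abs_of_pos hε]; ring
        rw [← NNReal.coe_le_coe]
        simpa only [coe_nnnorm, Real.norm_eq_abs] using this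
      · have hvint : ∫⁻ s, (‖v s‖₊ : ℝ≥0∞) ^ (2:ℝ) ∂μ < ∞ := by
          have := lintegral_rpow_enorm_lt_top_of_eLpNorm_lt_top (f := ⇑v)
            two_ne_zero ENNReal.ofNat_ne_top (Lp.eLpNorm_lt_top v)
          simpa [enorm_eq_nnnorm] using this
        exact hvint.ne
      · filter_upwards [hv] with s hs
        have : Tendsto (fun ε : ℝ => D ε s / ε) (𝓝[>] (0:ℝ)) (𝓝 0) := hs
        have hcont : Continuous fun r : ℝ => ((‖r‖₊ : ℝ≥0∞)) ^ (2:ℝ) :=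
          (ENNReal.continuous_rpow_const (y := (2:ℝ))).comp
            (ENNReal.continuous_coe.comp continuous_nnnorm)
        have h2 := (hcont.tendsto (0:ℝ)).comp this
        simp only [Function.comp_def, nnnorm_zero, ENNReal.coe_zero] at h2
        rwa [ENNReal.zero_rpow_of_pos (by norm_num : (0:ℝ) < 2)] at h2
    have hsq : Tendsto (fun ε : ℝ => eLpNorm (fun s => D ε s / ε) 2 μ)
        (𝓝[>] (0:ℝ)) (𝓝 0) := by
      have heq : ∀ ε : ℝ, eLpNorm (fun s => D ε s / ε) 2 μ =
          (∫⁻ s, (‖D ε s / ε‖₊ : ℝ≥0∞) ^ (2:ℝ) ∂μ) ^ ((1:ℝ)/2) := by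
        intro ε
        rw [eLpNorm_eq_lintegral_rpow_enorm_toReal two_ne_zero ENNReal.ofNat_ne_top]
        norm_num [enorm_eq_nnnorm]
      simp_rw [heq]
      have hcont : Tendsto (fun y : ℝ≥0∞ => y ^ ((1:ℝ)/2)) (𝓝 0) (𝓝 0) := by
        have := (ENNReal.continuous_rpow_const (y := (1:ℝ)/2)).continuousAt (x := 0)
        simpa [ENNReal.zero_rpow_of_pos (by norm_num : (0:ℝ) < 1/2)] using this.tendsto
      exact hcont.comp hI
    have := (ENNReal.tendsto_toReal (a := 0) (by simp)).comp hsq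
    simpa [Function.comp_def] using this
  -- Step 3: squeeze
  show Tendsto (fun ε : ℝ =>
    infDist (ubar + ε • v) {u : Lp Ht 2 μ | ∀ᵐ s ∂μ, u s ∈ U} / ε) (𝓝[>] (0:ℝ)) (𝓝 0)
  apply squeeze_zero' (g := fun ε : ℝ => (eLpNorm (fun s => D ε s / ε) 2 μ).toReal)
  · filter_upwards [self_mem_nhdsWithin] with ε (hε : 0 < ε)
    exact div_nonneg infDist_nonneg hε.le
  · filter_upwards [self_mem_nhdsWithin] with ε (hε : 0 < ε)
    have hrw : eLpNorm (fun s => D ε s / ε) 2 μ = ‖ε⁻¹‖₊ * eLpNorm (D ε) 2 μ := by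
      rw [show (fun s => D ε s / ε) = ε⁻¹ • D ε by funext s; simp [div_eq_inv_mul],
        eLpNorm_const_smul, enorm_eq_nnnorm]
    rw [hrw, ENNReal.toReal_mul]
    have : (‖ε⁻¹‖₊ : ℝ≥0∞).toReal = ε⁻¹ := by
      simp [Real.nnnorm_of_nonneg (inv_nonneg.2 hε.le), abs_of_pos (inv_pos.2 hε)]
    rw [this, div_le_iff₀ hε]
    calc infDist (ubar + ε • v) {u : Lp Ht 2 μ | ∀ᵐ s ∂μ, u s ∈ U} ≤
        (eLpNorm (D ε) 2 μ).toReal := key ε hε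
      _ = ε⁻¹ * (eLpNorm (D ε) 2 μ).toReal * ε := by field_simp
  · exact step2
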